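/- Fix an integer n ≥ 1, a real constant Λ, and a real number K ≠ 0. Let F : ℝ³ → ℝ³ be the vector field F(x, y, z) = ((1/2)x(y² + z² − x²), (1/2)y(z² + x² − y²), (1/2)n·z(x² + y² − z² − (2Λ/n)x²y²)). Then F is differentiable at (K, K, 0), and the characteristic polynomial of its total derivative there is X(X + 2K²)(X − (nK² − ΛK⁴)). In particular, if Λ ≤ 0 the derivative has one positive eigenvalue nK² − ΛK⁴, one zero eigenvalue, and one negative eigenvalue −2K². -/
import Mathlib


/- STATEMENT 3: the linearisation of the reduced Kähler–Einstein system at the critical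
point (K, K, 0), K ≠ 0: characteristic polynomial X(X + 2K²)(X − (nK² − ΛK⁴)); for
Λ ≤ 0 the eigenvalues are nK² − ΛK⁴ > 0, 0, and −2K² < 0. -/

set_option maxHeartbeats 1000000 in
open Polynomial in
theorem linearisation_at_KK0
    (n : ℕ) (hn : 1 ≤ n) (Λ K : ℝ) (hK : K ≠ 0)
    (F : (Fin 3 → ℝ) → (Fin 3 → ℝ))
    (hF : ∀ p : Fin 3 → ℝ, F p =
      ![(1/2) * p 0 * (p 1 ^ 2 + p 2 ^ 2 - p 0 ^ 2),
        (1/2) * p 1 * (p 2 ^ 2 + p 0 ^ 2 - p 1 ^ 2),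
        (1/2) * (n : ℝ) * p 2 *
          (p 0 ^ 2 + p 1 ^ 2 - p 2 ^ 2 - (2 * Λ / (n : ℝ)) * p 0 ^ 2 * p 1 ^ 2)]) :
    DifferentiableAt ℝ F ![K, K, 0] ∧
    LinearMap.charpoly (fderiv ℝ F ![K, K, 0]).toLinearMap
      = X * (X + C (2 * K ^ 2)) * (X - C ((n : ℝ) * K ^ 2 - Λ * K ^ 4)) ∧
    (Λ ≤ 0 →
      Module.End.HasEigenvalue (fderiv ℝ F ![K, K, 0]).toLinearMap
        ((n : ℝ) * K ^ 2 - Λ * K ^ 4) ∧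
      0 < (n : ℝ) * K ^ 2 - Λ * K ^ 4 ∧
      Module.End.HasEigenvalue (fderiv ℝ F ![K, K, 0]).toLinearMap (0 : ℝ) ∧
      Module.End.HasEigenvalue (fderiv ℝ F ![K, K, 0]).toLinearMap (-(2 * K ^ 2)) ∧
      -(2 * K ^ 2) < 0) := by
  have hn0 : (n : ℝ) ≠ 0 := Nat.cast_ne_zero.2 (by omega)
  set x : Fin 3 → ℝ := ![K, K, 0] with hx
  set J : Matrix (Fin 3) (Fin 3) ℝ :=
    !![-K^2, K^2, 0; K^2, -K^2, 0; 0, 0, (n : ℝ) * K^2 - Λ * K^4] with hJ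
  set L : (Fin 3 → ℝ) →L[ℝ] (Fin 3 → ℝ) :=
    LinearMap.toContinuousLinearMap (Matrix.toLin' J) with hL
  have hFeq : F = fun p : Fin 3 → ℝ =>
      ![(1/2) * p 0 * (p 1 ^ 2 + p 2 ^ 2 - p 0 ^ 2),
        (1/2) * p 1 * (p 2 ^ 2 + p 0 ^ 2 - p 1 ^ 2),
        (1/2) * (n : ℝ) * p 2 *
          (p 0 ^ 2 + p 1 ^ 2 - p 2 ^ 2 - (2 * Λ / (n : ℝ)) * p 0 ^ 2 * p 1 ^ 2)] :=
    funext hF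
  have hder : HasFDerivAt F L x := by
    rw [hFeq]
    have h0 : HasFDerivAt (fun p : Fin 3 → ℝ => p 0)
        (ContinuousLinearMap.proj (R := ℝ) (φ := fun _ : Fin 3 => ℝ) 0) x :=
      (ContinuousLinearMap.proj (R := ℝ) (φ := fun _ : Fin 3 => ℝ) 0).hasFDerivAt
    have h1 : HasFDerivAt (fun p : Fin 3 → ℝ => p 1)
        (ContinuousLinearMap.proj (R := ℝ) (φ := fun _ : Fin 3 => ℝ) 1) x :=
      (ContinuousLinearMap.proj (R := ℝ) (φ := fun _ : Fin 3 => ℝ) 1).hasFDerivAt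
    have h2 : HasFDerivAt (fun p : Fin 3 → ℝ => p 2)
        (ContinuousLinearMap.proj (R := ℝ) (φ := fun _ : Fin 3 => ℝ) 2) x :=
      (ContinuousLinearMap.proj (R := ℝ) (φ := fun _ : Fin 3 => ℝ) 2).hasFDerivAt
    have hx0 : x 0 = K := rfl
    have hx1 : x 1 = K := rfl
    have hx2 : x 2 = (0:ℝ) := rfl
    have key0 : HasFDerivAt (fun p : Fin 3 → ℝ => (1/2) * p 0 * (p 1 ^ 2 + p 2 ^ 2 - p 0 ^ 2))
        ((ContinuousLinearMap.proj 0).comp L) x := by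
      have h := (h0.const_mul (1/2 : ℝ)).mul (((h1.mul h1).add (h2.mul h2)).sub (h0.mul h0))
      have heq : (fun p : Fin 3 → ℝ => (1/2) * p 0 * (p 1 ^ 2 + p 2 ^ 2 - p 0 ^ 2))
          = fun p : Fin 3 → ℝ => (1/2) * p 0 * (p 1 * p 1 + p 2 * p 2 - p 0 * p 0) := by
        funext p; ring
      rw [heq]
      refine h.congr_fderiv ?_
      ext v
      simp [hL, Matrix.toLin'_apply, Matrix.mulVec, dotProduct,
        Fin.sum_univ_three, hJ, hx0, hx1, hx2]
      ring
    have key1 : HasFDerivAt (fun p : Fin 3 → ℝ => (1/2) * p 1 * (p 2 ^ 2 + p 0 ^ 2 - p 1 ^ 2))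
        ((ContinuousLinearMap.proj 1).comp L) x := by
      have h := (h1.const_mul (1/2 : ℝ)).mul (((h2.mul h2).add (h0.mul h0)).sub (h1.mul h1))
      have heq : (fun p : Fin 3 → ℝ => (1/2) * p 1 * (p 2 ^ 2 + p 0 ^ 2 - p 1 ^ 2))
          = fun p : Fin 3 → ℝ => (1/2) * p 1 * (p 2 * p 2 + p 0 * p 0 - p 1 * p 1) := by
        funext p; ring
      rw [heq]
      refine h.congr_fderiv ?_
      ext v
      simp [hL, Matrix.toLin'_apply, Matrix.mulVec, dotProduct,
        Fin.sum_univ_three, hJ, hx0, hx1, hx2]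
      ring
    have key2 : HasFDerivAt (fun p : Fin 3 → ℝ => (1/2) * (n : ℝ) * p 2 *
          (p 0 ^ 2 + p 1 ^ 2 - p 2 ^ 2 - (2 * Λ / (n : ℝ)) * p 0 ^ 2 * p 1 ^ 2))
        ((ContinuousLinearMap.proj 2).comp L) x := by
      have h := (h2.const_mul ((1/2 : ℝ) * n)).mul
        ((((h0.mul h0).add (h1.mul h1)).sub (h2.mul h2)).sub
          (((h0.mul h0).const_mul (2 * Λ / (n:ℝ))).mul (h1.mul h1)))
      have heq : (fun p : Fin 3 → ℝ => (1/2) * (n : ℝ) * p 2 *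
            (p 0 ^ 2 + p 1 ^ 2 - p 2 ^ 2 - (2 * Λ / (n : ℝ)) * p 0 ^ 2 * p 1 ^ 2))
          = fun p : Fin 3 → ℝ => (1/2) * (n:ℝ) * p 2 *
            (p 0 * p 0 + p 1 * p 1 - p 2 * p 2 - (2 * Λ / (n:ℝ)) * (p 0 * p 0) * (p 1 * p 1)) := by
        funext p; ring
      rw [heq]
      refine h.congr_fderiv ?_
      ext v
      simp [hL, Matrix.toLin'_apply, Matrix.mulVec, dotProduct,
        Fin.sum_univ_three, hJ, hx0, hx1, hx2]
      field_simp
      ring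
    apply hasFDerivAt_pi''
    intro i
    fin_cases i
    · exact key0
    · exact key1
    · exact key2
  have hfd : fderiv ℝ F x = L := hder.fderiv
  refine ⟨hder.differentiableAt, ?_, ?_⟩
  · rw [hfd]
    have hcoe : (L.toLinearMap : (Fin 3 → ℝ) →ₗ[ℝ] (Fin 3 → ℝ)) = Matrix.toLin' J := rfl
    rw [hcoe]
    have : LinearMap.charpoly (Matrix.toLin' J) = J.charpoly := by
      rw [← LinearMap.charpoly_toMatrix (Matrix.toLin' J) (Pi.basisFun ℝ (Fin 3)),
        LinearMap.toMatrix_eq_toMatrix', LinearMap.toMatrix'_toLin']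
    rw [this, Matrix.charpoly, Matrix.det_fin_three]
    simp [Matrix.charmatrix_apply, hJ, Matrix.one_apply, Matrix.diagonal_apply]
    ring_nf
    simp only [map_ofNat]
    ring
  · intro hΛ
    have hpos : 0 < (n : ℝ) * K ^ 2 - Λ * K ^ 4 := by
      have h1 : (0:ℝ) < (n : ℝ) * K ^ 2 := by positivity
      have h2 : (0:ℝ) ≤ -Λ * K ^ 4 := by nlinarith [pow_pos (pow_two_pos_of_ne_zero hK) 1, sq_nonneg (K^2)]
      nlinarith
    have hKpos : 0 < K ^ 2 := pow_two_pos_of_ne_zero hK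
    rw [hfd]
    have happ : ∀ v : Fin 3 → ℝ, L.toLinearMap v = J.mulVec v := fun v => rfl
    refine ⟨?_, hpos, ?_, ?_, by linarith⟩
    · apply Module.End.hasEigenvalue_of_hasEigenvector (x := ![0,0,1])
      refine ⟨Module.End.mem_eigenspace_iff.2 ?_, ?_⟩
      · ext i
        fin_cases i <;>
          simp [happ, Matrix.mulVec, dotProduct, Fin.sum_univ_three, hJ]
      · intro h
        have := congrFun h 2
        simp at this
    · apply Module.End.hasEigenvalue_of_hasEigenvector (x := ![1,1,0])
      refine ⟨Module.End.mem_eigenspace_iff.2 ?_, ?_⟩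
      · ext i
        fin_cases i <;>
          simp [happ, Matrix.mulVec, dotProduct, Fin.sum_univ_three, hJ]
      · intro h
        have := congrFun h 0
        simp at this
    · apply Module.End.hasEigenvalue_of_hasEigenvector (x := ![1,-1,0])
      refine ⟨Module.End.mem_eigenspace_iff.2 ?_, ?_⟩
      · ext i
        fin_cases i <;>
          simp [happ, Matrix.mulVec, dotProduct, Fin.sum_univ_three, hJ] <;> ring
      · intro h
        have := congrFun h 0
        simp at this
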